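/- Let U and V be 2×2 complex matrices with V unitary (Vᴴ V = 1) and V * V = U. In the 8×8 complex matrices (three qubits q₁, q₂, q₃ with q₁, q₂ controls and q₃ target), define: N₁ := I₂ ⊗ ctrl V (control q₂, target q₃); N₂ := CNOT ⊗ I₂ (control q₁, target q₂); N₃ := I₂ ⊗ ctrl Vᴴ; N₄ := CNOT ⊗ I₂; N₅ := |0⟩⟨0| ⊗ I₄ + |1⟩⟨1| ⊗ I₂ ⊗ V (controlled-V with control q₁ and target q₃, identity on q₂). Then C²U = N₅ * N₄ * N₃ * N₂ * N₁ (N₁ applied first). This is the standard decomposition of the doubly-controlled gate C²U into two CNOTs and three singly-controlled V^{±1} gates. -/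

import Mathlib

open Matrix

/-- `n`-qubit computational basis states, the index set of the `n`-fold Kronecker
product of 2×2 matrices in the standard ordering (`2^n` elements). -/
abbrev Qu (n : ℕ) := Fin n → Fin 2

/-- Kronecker product of an `a`-qubit matrix and a `b`-qubit matrix, under the standard
identification of the `(a+b)`-qubit basis with pairs of bases. -/
def qKron {a b : ℕ} (A : Matrix (Qu a) (Qu a) ℂ) (B : Matrix (Qu b) (Qu b) ℂ) :
    Matrix (Qu (a + b)) (Qu (a + b)) ℂ :=
  Matrix.of fun i j =>
    A (fun m => i (Fin.castAdd b m)) (fun m => j (Fin.castAdd b m)) *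
      B (fun m => i (Fin.natAdd a m)) (fun m => j (Fin.natAdd a m))

/-- A 2×2 matrix viewed as a 1-qubit matrix. -/
def lift1 (M : Matrix (Fin 2) (Fin 2) ℂ) : Matrix (Qu 1) (Qu 1) ℂ :=
  Matrix.of fun i j => M (i 0) (j 0)

/-- `E_k = |1…1⟩⟨1…1|` on `k` qubits: a single `1` in the entry indexed by the all-ones
bit string. -/
def allOnes (k : ℕ) : Matrix (Qu k) (Qu k) ℂ :=
  Matrix.single (fun _ => 1) (fun _ => 1) 1

/-- The `k`-controlled gate `C^k M = (1 − E_k) ⊗ 1₂ + E_k ⊗ M`. -/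
def cGate (k : ℕ) (M : Matrix (Fin 2) (Fin 2) ℂ) :
    Matrix (Qu (k + 1)) (Qu (k + 1)) ℂ :=
  qKron ((1 : Matrix (Qu k) (Qu k) ℂ) - allOnes k) (1 : Matrix (Qu 1) (Qu 1) ℂ) +
    qKron (allOnes k) (lift1 M)

section Aux

open Kronecker

/-- Splitting an `(a+b)`-qubit basis state into its first `a` and last `b` bits. -/
def quSplit (a b : ℕ) : Qu (a + b) ≃ Qu a × Qu b where
  toFun x := (fun m => x (Fin.castAdd b m), fun m => x (Fin.natAdd a m))
  invFun p := fun i => Fin.addCases p.1 p.2 i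
  left_inv x := by
    funext i
    refine Fin.addCases (fun m => ?_) (fun m => ?_) i <;> simp
  right_inv p := by
    ext m <;> simp

lemma qKron_eq {a b : ℕ} (A : Matrix (Qu a) (Qu a) ℂ) (B : Matrix (Qu b) (Qu b) ℂ) :
    qKron A B = (A ⊗ₖ B).submatrix (quSplit a b) (quSplit a b) := rfl

lemma qKron_mul {a b : ℕ} (A C : Matrix (Qu a) (Qu a) ℂ) (B D : Matrix (Qu b) (Qu b) ℂ) :
    qKron A B * qKron C D = qKron (A * C) (B * D) := by
  rw [qKron_eq, qKron_eq, qKron_eq, Matrix.submatrix_mul_equiv, Matrix.mul_kronecker_mul]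

lemma qKron_one {a b : ℕ} :
    qKron (1 : Matrix (Qu a) (Qu a) ℂ) (1 : Matrix (Qu b) (Qu b) ℂ) = 1 := by
  rw [qKron_eq, Matrix.one_kronecker_one, Matrix.submatrix_one_equiv]

lemma qKron_add_left {a b : ℕ} (A B : Matrix (Qu a) (Qu a) ℂ) (C : Matrix (Qu b) (Qu b) ℂ) :
    qKron (A + B) C = qKron A C + qKron B C := by
  ext i j; simp [qKron, add_mul]

lemma qKron_sub_left {a b : ℕ} (A B : Matrix (Qu a) (Qu a) ℂ) (C : Matrix (Qu b) (Qu b) ℂ) :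
    qKron (A - B) C = qKron A C - qKron B C := by
  ext i j; simp [qKron, sub_mul]

lemma qKron_add_right {a b : ℕ} (A : Matrix (Qu a) (Qu a) ℂ) (B C : Matrix (Qu b) (Qu b) ℂ) :
    qKron A (B + C) = qKron A B + qKron A C := by
  ext i j; simp [qKron, mul_add]

lemma lift1_one : lift1 1 = (1 : Matrix (Qu 1) (Qu 1) ℂ) := by
  ext i j
  simp only [lift1, Matrix.of_apply, Matrix.one_apply]
  congr 1
  simp [funext_iff, Fin.forall_fin_one]

lemma lift1_mul (A B : Matrix (Fin 2) (Fin 2) ℂ) : lift1 A * lift1 B = lift1 (A * B) := by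
  ext i j
  simp only [lift1, Matrix.mul_apply, Matrix.of_apply]
  exact Fintype.sum_equiv (Equiv.funUnique (Fin 1) (Fin 2)) _ _ (fun x => rfl)

lemma lift1_add (A B : Matrix (Fin 2) (Fin 2) ℂ) : lift1 (A + B) = lift1 A + lift1 B := by
  ext i j; simp [lift1]

lemma lift1_sub (A B : Matrix (Fin 2) (Fin 2) ℂ) : lift1 (A - B) = lift1 A - lift1 B := by
  ext i j; simp [lift1]

lemma lift1_zero : lift1 0 = 0 := by
  ext i j; simp [lift1]

lemma qKron_zero_left {a b : ℕ} (B : Matrix (Qu b) (Qu b) ℂ) :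
    qKron (0 : Matrix (Qu a) (Qu a) ℂ) B = 0 := by
  ext i j; simp [qKron]

lemma qKron_assoc (A B C : Matrix (Fin 2) (Fin 2) ℂ) :
    qKron (qKron (lift1 A) (lift1 B)) (lift1 C)
      = qKron (lift1 A) (qKron (lift1 B) (lift1 C)) := by
  ext i j
  exact mul_assoc _ _ _

lemma allOnes_one : allOnes 1 = lift1 !![0, 0; 0, 1] := by
  ext i j
  simp only [allOnes, lift1, Matrix.single, Matrix.of_apply]
  have ki : ((fun _ => (1 : Fin 2)) = i) ↔ i 0 = 1 := by
    rw [eq_comm, funext_iff]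
    simp [Fin.forall_fin_one, eq_comm]
  have kj : ((fun _ => (1 : Fin 2)) = j) ↔ j 0 = 1 := by
    rw [eq_comm, funext_iff]
    simp [Fin.forall_fin_one, eq_comm]
  simp only [ki, kj]
  have h1 : i 0 = 0 ∨ i 0 = 1 := by omega
  have h2 : j 0 = 0 ∨ j 0 = 1 := by omega
  rcases h1 with h1 | h1 <;> rcases h2 with h2 | h2 <;> simp_all

lemma allOnes_two : allOnes 2 = qKron (lift1 !![0, 0; 0, 1]) (lift1 !![0, 0; 0, 1]) := by
  ext i j
  have c0 : ∀ f : Qu 2, f (Fin.castAdd 1 0) = f 0 := fun _ => rfl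
  have e1 : (Fin.natAdd 1 (0 : Fin 1)) = (1 : Fin 2) := by decide
  have n0 : ∀ f : Qu 2, f (Fin.natAdd 1 (0 : Fin 1)) = f 1 := fun f => congrArg f e1
  simp only [allOnes, qKron, lift1, Matrix.single, Matrix.of_apply, c0, n0]
  have key : ∀ f : Qu 2, ((fun _ => (1 : Fin 2)) = f) ↔ (f 0 = 1 ∧ f 1 = 1) := by
    intro f
    rw [eq_comm]
    constructor
    · intro h; rw [h]; exact ⟨rfl, rfl⟩
    · rintro ⟨h0, h1⟩; funext m; fin_cases m <;> assumption
  simp only [key]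
  have h1 : i 0 = 0 ∨ i 0 = 1 := by omega
  have h2 : i 1 = 0 ∨ i 1 = 1 := by omega
  have h3 : j 0 = 0 ∨ j 0 = 1 := by omega
  have h4 : j 1 = 0 ∨ j 1 = 1 := by omega
  rcases h1 with h1 | h1 <;> rcases h2 with h2 | h2 <;> rcases h3 with h3 | h3 <;>
    rcases h4 with h4 | h4 <;> simp_all

/-- Triple Kronecker product of one-qubit gates. -/
lemma qT_mul (a b c a' b' c' : Matrix (Fin 2) (Fin 2) ℂ) :
    (qKron (lift1 a) (qKron (lift1 b) (lift1 c)) : Matrix (Qu 3) (Qu 3) ℂ) *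
        qKron (lift1 a') (qKron (lift1 b') (lift1 c')) =
      qKron (lift1 (a * a')) (qKron (lift1 (b * b')) (lift1 (c * c'))) := by
  rw [qKron_mul, qKron_mul, lift1_mul, lift1_mul, lift1_mul]

lemma qT_zero_mid (a c : Matrix (Fin 2) (Fin 2) ℂ) :
    (qKron (lift1 a) (qKron (lift1 0) (lift1 c)) : Matrix (Qu 3) (Qu 3) ℂ) = 0 := by
  rw [lift1_zero, qKron_zero_left]
  ext i j; simp [qKron]

lemma qT_zero_left (b c : Matrix (Fin 2) (Fin 2) ℂ) :
    (qKron (lift1 0) (qKron (lift1 b) (lift1 c)) : Matrix (Qu 3) (Qu 3) ℂ) = 0 := by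
  rw [lift1_zero, qKron_zero_left]

lemma cGate_one (M : Matrix (Fin 2) (Fin 2) ℂ) :
    cGate 1 M = qKron (lift1 !![1, 0; 0, 0]) (lift1 1) +
      qKron (lift1 !![0, 0; 0, 1]) (lift1 M) := by
  have h : (1 : Matrix (Fin 2) (Fin 2) ℂ) - !![0, 0; 0, 1] = !![1, 0; 0, 0] := by
    ext i j; fin_cases i <;> fin_cases j <;> simp [Matrix.one_apply]
  unfold cGate
  rw [allOnes_one, ← lift1_one, ← lift1_sub, h]

lemma one_kron_ctrl (M : Matrix (Fin 2) (Fin 2) ℂ) :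
    qKron (1 : Matrix (Qu 1) (Qu 1) ℂ) (cGate 1 M) =
      qKron (lift1 1) (qKron (lift1 !![1, 0; 0, 0]) (lift1 1)) +
        qKron (lift1 1) (qKron (lift1 !![0, 0; 0, 1]) (lift1 M)) := by
  rw [cGate_one, ← lift1_one, qKron_add_right]

lemma ctrl_kron_one (M : Matrix (Fin 2) (Fin 2) ℂ) :
    qKron (cGate 1 M) (1 : Matrix (Qu 1) (Qu 1) ℂ) =
      qKron (lift1 !![1, 0; 0, 0]) (qKron (lift1 1) (lift1 1)) +
        qKron (lift1 !![0, 0; 0, 1]) (qKron (lift1 M) (lift1 1)) := by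
  rw [cGate_one, ← lift1_one, qKron_add_left, qKron_assoc, qKron_assoc]

lemma cGate2_expand (M : Matrix (Fin 2) (Fin 2) ℂ) :
    cGate 2 M = qKron (lift1 1) (qKron (lift1 1) (lift1 1)) -
        qKron (lift1 !![0, 0; 0, 1]) (qKron (lift1 !![0, 0; 0, 1]) (lift1 1)) +
          qKron (lift1 !![0, 0; 0, 1]) (qKron (lift1 !![0, 0; 0, 1]) (lift1 M)) := by
  show qKron ((1 : Matrix (Qu 2) (Qu 2) ℂ) - allOnes 2) (1 : Matrix (Qu 1) (Qu 1) ℂ) +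
      qKron (allOnes 2) (lift1 M) = _
  rw [allOnes_two, show (1 : Matrix (Qu 2) (Qu 2) ℂ) = qKron (lift1 1) (lift1 1) by
      rw [lift1_one]; exact (qKron_one (a := 1) (b := 1)).symm,
    ← lift1_one, qKron_sub_left, qKron_assoc, qKron_assoc, qKron_assoc]

lemma one_eq_proj : (1 : Matrix (Fin 2) (Fin 2) ℂ) = !![1, 0; 0, 0] + !![0, 0; 0, 1] := by
  ext i j
  fin_cases i <;> fin_cases j <;> simp [Matrix.one_apply]

end Aux

/-- The standard decomposition of the doubly-controlled gate `C²U` (controls `q₁, q₂`,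
target `q₃`) into two CNOTs and three singly-controlled `V^{±1}` gates, where `V² = U`
and `V` is unitary: `C²U = N₅ N₄ N₃ N₂ N₁` with `N₁ = I₂ ⊗ ctrl V`,
`N₂ = N₄ = CNOT ⊗ I₂`, `N₃ = I₂ ⊗ ctrl V†`,
`N₅ = |0⟩⟨0| ⊗ I₄ + |1⟩⟨1| ⊗ I₂ ⊗ V`. -/
theorem c2U_decomposition
    (U V : Matrix (Fin 2) (Fin 2) ℂ) (hVunit : Vᴴ * V = 1) (hVV : V * V = U)
    (N₁ N₂ N₃ N₄ N₅ : Matrix (Qu 3) (Qu 3) ℂ)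
    (hN₁ : N₁ = qKron (1 : Matrix (Qu 1) (Qu 1) ℂ) (cGate 1 V))
    (hN₂ : N₂ = qKron (cGate 1 !![0, 1; 1, 0]) (1 : Matrix (Qu 1) (Qu 1) ℂ))
    (hN₃ : N₃ = qKron (1 : Matrix (Qu 1) (Qu 1) ℂ) (cGate 1 Vᴴ))
    (hN₄ : N₄ = qKron (cGate 1 !![0, 1; 1, 0]) (1 : Matrix (Qu 1) (Qu 1) ℂ))
    (hN₅ : N₅ = qKron (lift1 !![1, 0; 0, 0]) (1 : Matrix (Qu 2) (Qu 2) ℂ) +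
        qKron (lift1 !![0, 0; 0, 1]) (qKron (1 : Matrix (Qu 1) (Qu 1) ℂ) (lift1 V))) :
    cGate 2 U = N₅ * N₄ * N₃ * N₂ * N₁ := by
  subst hN₁ hN₂ hN₃ hN₄ hN₅
  have hVVh : V * Vᴴ = 1 := mul_eq_one_comm.mp hVunit
  -- 2×2 product facts
  have m1 : !![(1:ℂ), 0; 0, 0] * !![(1:ℂ), 0; 0, 0] = !![(1:ℂ), 0; 0, 0] := by
    ext i j; fin_cases i <;> fin_cases j <;> simp [Matrix.mul_apply, Fin.sum_univ_two]
  have m2 : !![(1:ℂ), 0; 0, 0] * !![(0:ℂ), 0; 0, 1] = 0 := by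
    ext i j; fin_cases i <;> fin_cases j <;> simp [Matrix.mul_apply, Fin.sum_univ_two]
  have m3 : !![(0:ℂ), 0; 0, 1] * !![(1:ℂ), 0; 0, 0] = 0 := by
    ext i j; fin_cases i <;> fin_cases j <;> simp [Matrix.mul_apply, Fin.sum_univ_two]
  have m4 : !![(0:ℂ), 0; 0, 1] * !![(0:ℂ), 0; 0, 1] = !![(0:ℂ), 0; 0, 1] := by
    ext i j; fin_cases i <;> fin_cases j <;> simp [Matrix.mul_apply, Fin.sum_univ_two]
  have m5 : !![(0:ℂ), 1; 1, 0] * !![(1:ℂ), 0; 0, 0] = !![(0:ℂ), 0; 1, 0] := by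
    ext i j; fin_cases i <;> fin_cases j <;> simp [Matrix.mul_apply, Fin.sum_univ_two]
  have m6 : !![(0:ℂ), 1; 1, 0] * !![(0:ℂ), 0; 0, 1] = !![(0:ℂ), 1; 0, 0] := by
    ext i j; fin_cases i <;> fin_cases j <;> simp [Matrix.mul_apply, Fin.sum_univ_two]
  have m7 : !![(0:ℂ), 0; 1, 0] * !![(0:ℂ), 1; 1, 0] = !![(0:ℂ), 0; 0, 1] := by
    ext i j; fin_cases i <;> fin_cases j <;> simp [Matrix.mul_apply, Fin.sum_univ_two]
  have m8 : !![(0:ℂ), 1; 0, 0] * !![(0:ℂ), 1; 1, 0] = !![(1:ℂ), 0; 0, 0] := by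
    ext i j; fin_cases i <;> fin_cases j <;> simp [Matrix.mul_apply, Fin.sum_univ_two]
  rw [cGate2_expand, ctrl_kron_one, one_kron_ctrl, one_kron_ctrl,
    show (1 : Matrix (Qu 2) (Qu 2) ℂ) = qKron (lift1 1) (lift1 1) by
      rw [lift1_one]; exact (qKron_one (a := 1) (b := 1)).symm,
    ← lift1_one]
  simp only [mul_add, add_mul]
  repeat rw [qT_mul]
  simp only [m1, m2, m3, m4, m5, m6, m7, m8, one_mul, mul_one, hVunit, hVVh, hVV,
    qT_zero_mid, qT_zero_left, add_zero, zero_add, zero_mul, mul_zero]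
  have h1 : (qKron (lift1 1) (qKron (lift1 1) (lift1 1)) : Matrix (Qu 3) (Qu 3) ℂ) =
      qKron (lift1 (!![1, 0; 0, 0] + !![0, 0; 0, 1]))
        (qKron (lift1 (!![1, 0; 0, 0] + !![0, 0; 0, 1])) (lift1 1)) := by
    rw [← one_eq_proj]
  rw [h1]
  repeat rw [lift1_add]
  repeat rw [qKron_add_left]
  repeat rw [qKron_add_right]
  abel
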